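/- arXiv:1604.02557 — 3 statements merged into one kernel-verified Lean document; each statement's English description precedes it below -/
import Mathlib

section
/- Let n = 2^k with k ≥ 1 and let F be the n×n Walsh–Hadamard matrix. Then the quasi-entropy of F equals n·log₂ n, i.e. Φ(F) = n log₂ n. -/
open Matrix Finset

noncomputable section

/-- Walsh–Hadamard matrix of size `2^k`. -/
def WH (k : ℕ) : Matrix (Fin (2^k)) (Fin (2^k)) ℝ := fun i j =>
  ((-1 : ℝ) ^ (∑ b ∈ Finset.range k, ((i.val >>> b) % 2) * ((j.val >>> b) % 2))) /
    Real.sqrt (2^k)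

/-- Quasi-entropy `Φ(M)` (base-2 logs, `0·log 0 = 0`). -/
def qent {n : ℕ} (M : Matrix (Fin n) (Fin n) ℝ) : ℝ :=
  -∑ i, ∑ j, (M i j * M⁻¹ᵀ i j) * Real.logb 2 |M i j * M⁻¹ᵀ i j|

/-- Preconditioned quasi-entropy `Φ_{A,B}(M)`. -/
def qentP {n : ℕ} (A B M : Matrix (Fin n) (Fin n) ℝ) : ℝ :=
  -∑ i, ∑ j, ((M * A) i j * (M⁻¹ᵀ * B) i j) * Real.logb 2 |(M * A) i j * (M⁻¹ᵀ * B) i j|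

/-- Summand of the paired potential. -/
def pairS {n : ℕ} (P Q : Matrix (Fin n) (Fin n ⊕ Fin n) ℝ)
    (M : Matrix (Fin n) (Fin n) ℝ) (i j : Fin n) : ℝ :=
  (M * P) i (Sum.inl j) * (M⁻¹ᵀ * Q) i (Sum.inl j) +
    (M * P) i (Sum.inr j) * (M⁻¹ᵀ * Q) i (Sum.inr j)

/-- Paired potential `Φ̂_{P,Q}(M)` for preconditioners `P Q : n × 2n`. -/
def pairedPot {n : ℕ} (P Q : Matrix (Fin n) (Fin n ⊕ Fin n) ℝ)
    (M : Matrix (Fin n) (Fin n) ℝ) : ℝ :=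
  -∑ i, ∑ j, pairS P Q M i j * Real.logb 2 |pairS P Q M i j|

/-- Planar rotation matrix `R_{i,i',θ}`. -/
def rotMat {n : ℕ} (i i' : Fin n) (θ : ℝ) : Matrix (Fin n) (Fin n) ℝ :=
  Matrix.of fun a b =>
    if a = i ∧ b = i then Real.cos θ
    else if a = i ∧ b = i' then Real.sin θ
    else if a = i' ∧ b = i then -Real.sin θ
    else if a = i' ∧ b = i' then Real.cos θ
    else if a = b then 1 else 0

/-- Spectral norm (ℓ₂ operator norm) of a square real matrix. -/
def specNorm {n : ℕ} (M : Matrix (Fin n) (Fin n) ℝ) : ℝ :=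
  ‖LinearMap.toContinuousLinearMap (Matrix.toEuclideanLin M)‖

/-- Condition number `κ(M) = ‖M‖₂ ‖M⁻¹‖₂`. -/
def condNum {n : ℕ} (M : Matrix (Fin n) (Fin n) ℝ) : ℝ :=
  specNorm M * specNorm M⁻¹

/-- Singular values: square roots of eigenvalues of `Mᴴ M` (= `Mᵀ M` over ℝ). -/
def singVals {n : ℕ} (M : Matrix (Fin n) (Fin n) ℝ) (i : Fin n) : ℝ :=
  Real.sqrt ((Matrix.isHermitian_conjTranspose_mul_self M).eigenvalues i)

/-- Rotation step of the linear algebraic model. -/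
def IsRotStep {n : ℕ} (M M' : Matrix (Fin n) (Fin n) ℝ) : Prop :=
  ∃ (i i' : Fin n) (θ : ℝ), i < i' ∧ M' = rotMat i i' θ * M

/-- Constant gate: one row is multiplied by a nonzero constant. -/
def IsConstGate {n : ℕ} (M M' : Matrix (Fin n) (Fin n) ℝ) : Prop :=
  ∃ (r : Fin n) (c : ℝ), c ≠ 0 ∧ M' = Matrix.updateRow M r (c • M r)

/-- A single step of a linear algebraic algorithm. -/
def IsStep {n : ℕ} (M M' : Matrix (Fin n) (Fin n) ℝ) : Prop :=
  IsRotStep M M' ∨ IsConstGate M M'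

/-- `A` is an `m`-step linear algebraic algorithm. -/
def IsAlgorithm {n : ℕ} (m : ℕ) (A : ℕ → Matrix (Fin n) (Fin n) ℝ) : Prop :=
  A 0 = 1 ∧ ∀ t < m, IsStep (A t) (A (t+1))

/-- The algorithm is uniformly `κ`-well conditioned. -/
def WellConditioned {n : ℕ} (m : ℕ) (A : ℕ → Matrix (Fin n) (Fin n) ℝ) (κ : ℝ) : Prop :=
  ∀ t ≤ m, IsUnit (A t).det ∧ condNum (A t) ≤ κ

end

noncomputable section

def eS (k i j : ℕ) : ℕ := ∑ b ∈ Finset.range k, ((i >>> b) % 2) * ((j >>> b) % 2)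

lemma eS_symm (k i j : ℕ) : eS k i j = eS k j i := by
  unfold eS; exact Finset.sum_congr rfl fun b _ => mul_comm _ _

lemma eS_succ (k i j : ℕ) : eS (k+1) i j = (i % 2) * (j % 2) + eS k (i/2) (j/2) := by
  unfold eS
  rw [Finset.sum_range_succ']
  simp only [Nat.shiftRight_eq_div_pow, pow_zero, Nat.div_one, pow_succ]
  rw [add_comm]
  congr 1
  refine Finset.sum_congr rfl fun b _ => ?_
  rw [Nat.div_div_eq_div_mul, Nat.div_div_eq_div_mul, mul_comm (2^b) 2, mul_comm (2:ℕ) _]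

lemma eS_even (k m q : ℕ) : eS (k+1) m (2*q) = eS k (m/2) q := by
  rw [eS_succ]
  have h1 : (2*q) % 2 = 0 := by omega
  have h2 : (2*q) / 2 = q := by omega
  rw [h1, h2]; ring

lemma eS_odd (k m q : ℕ) : eS (k+1) m (2*q+1) = m % 2 + eS k (m/2) q := by
  rw [eS_succ]
  have h1 : (2*q+1) % 2 = 1 := by omega
  have h2 : (2*q+1) / 2 = q := by omega
  rw [h1, h2]; ring

lemma sum_range_two_mul {M : Type*} [AddCommMonoid M] (N : ℕ) (g : ℕ → M) :
    ∑ l ∈ Finset.range (2*N), g l = ∑ q ∈ Finset.range N, (g (2*q) + g (2*q+1)) := by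
  induction N with
  | zero => simp
  | succ n ih =>
    rw [Nat.mul_succ, Finset.sum_range_succ, Finset.sum_range_succ, Finset.sum_range_succ, ih,
      add_assoc]

lemma key (k : ℕ) : ∀ i j, i < 2^k → j < 2^k →
    ∑ l ∈ Finset.range (2^k), ((-1:ℝ))^(eS k i l) * (-1)^(eS k j l)
      = if i = j then (2^k : ℝ) else 0 := by
  induction k with
  | zero =>
    intro i j hi hj
    interval_cases i; interval_cases j
    simp [eS]
  | succ k ih =>
    intro i j hi hj
    have h2 : (2:ℕ)^(k+1) = 2 * 2^k := by ring
    rw [h2, sum_range_two_mul]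
    have hsum : ∀ q ∈ Finset.range (2^k),
        ((-1:ℝ))^(eS (k+1) i (2*q)) * (-1)^(eS (k+1) j (2*q)) +
          (-1)^(eS (k+1) i (2*q+1)) * (-1)^(eS (k+1) j (2*q+1))
        = (1 + (-1)^(i % 2 + j % 2)) *
            ((-1)^(eS k (i/2) q) * (-1)^(eS k (j/2) q)) := by
      intro q _
      rw [eS_even, eS_even, eS_odd, eS_odd, pow_add, pow_add, pow_add]
      ring
    rw [Finset.sum_congr rfl hsum, ← Finset.mul_sum,
      ih (i/2) (j/2) (by omega) (by omega)]
    have hi2 := Nat.mod_two_eq_zero_or_one i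
    have hj2 := Nat.mod_two_eq_zero_or_one j
    rcases hi2 with hi2 | hi2 <;> rcases hj2 with hj2 | hj2
    · rw [hi2, hj2]
      by_cases h : i/2 = j/2
      · have hij : i = j := by omega
        rw [if_pos h, if_pos hij]
        push_cast; ring
      · have hij : ¬ i = j := by omega
        rw [if_neg h, if_neg hij]; ring
    · have hij : ¬ i = j := by omega
      rw [hi2, hj2, if_neg hij]
      norm_num
    · have hij : ¬ i = j := by omega
      rw [hi2, hj2, if_neg hij]
      norm_num
    · rw [hi2, hj2]
      by_cases h : i/2 = j/2
      · have hij : i = j := by omega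
        rw [if_pos h, if_pos hij]
        norm_num; ring
      · have hij : ¬ i = j := by omega
        rw [if_neg h, if_neg hij]; ring

lemma WH_apply (k : ℕ) (i j : Fin (2^k)) :
    WH k i j = (-1 : ℝ) ^ (eS k i.val j.val) / Real.sqrt (2^k) := rfl

lemma sqrt_sq (k : ℕ) : Real.sqrt (2^k) * Real.sqrt (2^k) = (2^k : ℝ) :=
  Real.mul_self_sqrt (by positivity)

lemma WH_mul_WH (k : ℕ) : WH k * WH k = 1 := by
  ext i j
  rw [Matrix.mul_apply]
  have hterm : ∀ l : Fin (2^k), WH k i l * WH k l j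
      = ((-1:ℝ)^(eS k i.val l.val) * (-1)^(eS k j.val l.val)) / (2^k : ℝ) := by
    intro l
    rw [WH_apply, WH_apply, eS_symm k l.val j.val, div_mul_div_comm, sqrt_sq]
  rw [Finset.sum_congr rfl fun l _ => hterm l, ← Finset.sum_div]
  have : ∑ l : Fin (2^k), (-1:ℝ)^(eS k i.val l.val) * (-1)^(eS k j.val l.val)
      = ∑ l ∈ Finset.range (2^k), (-1:ℝ)^(eS k i.val l) * (-1)^(eS k j.val l) :=
    Fin.sum_univ_eq_sum_range (fun l => (-1:ℝ)^(eS k i.val l) * (-1)^(eS k j.val l)) (2^k)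
  rw [this, key k i.val j.val i.isLt j.isLt]
  by_cases h : i = j
  · have : i.val = j.val := congrArg Fin.val h
    subst h
    rw [if_pos rfl, Matrix.one_apply_eq, div_self (by positivity)]
  · have hv : ¬ i.val = j.val := fun hh => h (Fin.ext hh)
    rw [if_neg hv, Matrix.one_apply_ne h, zero_div]

lemma WH_transpose (k : ℕ) : (WH k)ᵀ = WH k := by
  ext i j
  rw [Matrix.transpose_apply, WH_apply, WH_apply, eS_symm]

lemma WH_inv (k : ℕ) : (WH k)⁻¹ = WH k := Matrix.inv_eq_right_inv (WH_mul_WH k)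

lemma WH_sq (k : ℕ) (i j : Fin (2^k)) : WH k i j * WH k i j = ((2:ℝ)^k)⁻¹ := by
  rw [WH_apply, div_mul_div_comm, sqrt_sq, ← pow_add, Even.neg_one_pow ⟨_, rfl⟩, one_div]

lemma logb_two_pow (k : ℕ) : Real.logb 2 ((2:ℝ)^k) = (k : ℝ) := by
  rw [Real.logb_pow, Real.logb_self_eq_one (by norm_num)]; ring

end

/-- the quasi-entropy of the Walsh–Hadamard matrix is `n log₂ n`. -/
theorem qent_walsh_hadamard (k : ℕ) (hk : 1 ≤ k) :
    qent (WH k) = (2^k : ℝ) * Real.logb 2 (2^k) := by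
  unfold qent
  rw [WH_inv, WH_transpose]
  have hlog : Real.logb 2 |((2:ℝ)^k)⁻¹| = -(k:ℝ) := by
    rw [abs_of_pos (by positivity), Real.logb_inv, logb_two_pow]
  simp only [WH_sq, hlog]
  rw [Finset.sum_const, Finset.sum_const]
  simp only [Finset.card_univ, Fintype.card_fin, nsmul_eq_mul]
  rw [logb_two_pow]
  push_cast
  field_simp
end

section
/- There exist constants α ∈ (0, 1/2), c > 0 and n₀ such that for every n = 2^k ≥ n₀ and every ε with n^{−α} ≤ ε ≤ α, the paired potential of the Fourier ε-perturbation with preconditioners P = [Id, −F], Q = [F, Id] satisfies Φ̂_{P,Q}(Id + εF) ≥ c ε n log₂ n, where F is the n×n Walsh–Hadamard matrix. -/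
open Matrix Finset

noncomputable section
namespace PPaux
def dg (x b : ℕ) : ℕ := x / 2^b % 2

lemma dg_fin {k : ℕ} (i : Fin (2^k)) (b : Fin k) :
    ((finFunctionFinEquiv.symm i) b : ℕ) = dg i.val b.val := rfl

lemma eq_of_dg {k : ℕ} (i j : Fin (2^k))
    (h : ∀ b : Fin k, dg i.val b.val = dg j.val b.val) : i = j := by
  have : finFunctionFinEquiv.symm i = finFunctionFinEquiv.symm j := by
    funext b; exact Fin.ext (by rw [dg_fin, dg_fin, h b])
  exact finFunctionFinEquiv.symm.injective this

lemma key_sum {k : ℕ} (i j : Fin (2^k)) :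
    ∑ l : Fin (2^k),
      ((-1:ℝ) ^ (∑ b : Fin k, (dg i.val b.val + dg j.val b.val) * dg l.val b.val)) =
      if i = j then (2^k : ℝ) else 0 := by
  rw [← Equiv.sum_comp (finFunctionFinEquiv : (Fin k → Fin 2) ≃ Fin (2^k))]
  have hd : ∀ (g : Fin k → Fin 2) (b : Fin k),
      dg ((finFunctionFinEquiv g : Fin (2^k)) : ℕ) b.val = (g b : ℕ) := fun g b =>
    congrArg Fin.val (congrFun (finFunctionFinEquiv.symm_apply_apply g) b)
  have step1 : ∀ g : Fin k → Fin 2,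
      ((-1:ℝ) ^ (∑ b : Fin k, (dg i.val b.val + dg j.val b.val) *
        dg ((finFunctionFinEquiv g : Fin (2^k)) : ℕ) b.val)) =
      ∏ b : Fin k, ((-1:ℝ) ^ ((dg i.val b.val + dg j.val b.val) * (g b : ℕ))) := by
    intro g
    simp_rw [hd g]
    rw [← Finset.prod_pow_eq_pow_sum]
  simp_rw [step1]
  have hps := Finset.prod_univ_sum (fun _ : Fin k => (Finset.univ : Finset (Fin 2)))
    (fun b x => ((-1:ℝ) ^ ((dg i.val b.val + dg j.val b.val) * (x : ℕ))))
  rw [← Fintype.piFinset_univ, ← hps]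
  have step2 : ∀ b : Fin k, (∑ x : Fin 2,
      ((-1:ℝ) ^ ((dg i.val b.val + dg j.val b.val) * (x : ℕ)))) =
      if dg i.val b.val = dg j.val b.val then 2 else 0 := by
    intro b
    rw [Fin.sum_univ_two]
    have h1 : ((0 : Fin 2) : ℕ) = 0 := rfl
    have h2 : ((1 : Fin 2) : ℕ) = 1 := rfl
    rw [h1, h2, Nat.mul_zero, pow_zero, Nat.mul_one]
    rcases Nat.mod_two_eq_zero_or_one (i.val / 2^b.val) with h | h <;>
      rcases Nat.mod_two_eq_zero_or_one (j.val / 2^b.val) with h' | h' <;>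
      simp [dg, h, h'] <;> norm_num
  simp_rw [step2]
  by_cases hij : i = j
  · subst hij; simp
  · rw [if_neg hij]
    obtain ⟨b, hb⟩ : ∃ b : Fin k, dg i.val b.val ≠ dg j.val b.val := by
      by_contra h
      push_neg at h
      exact hij (eq_of_dg i j h)
    exact Finset.prod_eq_zero (Finset.mem_univ b) (by rw [if_neg hb])


lemma WH_apply {k : ℕ} (i j : Fin (2^k)) :
    WH k i j = ((-1 : ℝ) ^ (∑ b : Fin k, dg i.val b.val * dg j.val b.val)) /
      Real.sqrt (2^k) := by
  unfold WH dg
  rw [Finset.sum_range fun b => ((i.val >>> b) % 2) * ((j.val >>> b) % 2)]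
  simp_rw [Nat.shiftRight_eq_div_pow]

lemma WH_symm {k : ℕ} : (WH k)ᵀ = WH k := by
  ext i j
  rw [Matrix.transpose_apply, WH_apply, WH_apply]
  congr 1
  congr 1
  exact Finset.sum_congr rfl fun b _ => Nat.mul_comm _ _

lemma sqrt_n_pos (k : ℕ) : 0 < Real.sqrt (2^k) :=
  Real.sqrt_pos.2 (by positivity)

lemma WH_mul_WH {k : ℕ} : WH k * WH k = 1 := by
  ext i j
  rw [Matrix.mul_apply, Matrix.one_apply]
  have h : ∀ l : Fin (2^k), WH k i l * WH k l j =
      ((-1:ℝ) ^ (∑ b : Fin k, (dg i.val b.val + dg j.val b.val) * dg l.val b.val)) /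
        ((2:ℝ)^k) := by
    intro l
    rw [WH_apply, WH_apply, div_mul_div_comm, Real.mul_self_sqrt (by positivity),
      ← pow_add]
    congr 2
    rw [← Finset.sum_add_distrib]
    exact Finset.sum_congr rfl fun b _ => by ring
  simp_rw [h, ← Finset.sum_div, key_sum i j]
  by_cases hij : i = j
  · rw [if_pos hij, if_pos hij]
    rw [div_eq_one_iff_eq (by positivity)]
  · rw [if_neg hij, if_neg hij, zero_div]

lemma WH_sq_entry {k : ℕ} (i j : Fin (2^k)) : WH k i j * WH k i j = 1 / (2^k : ℝ) := by
  rw [WH_apply, div_mul_div_comm, Real.mul_self_sqrt (by positivity), ← pow_add,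
    ← two_mul, pow_mul]
  norm_num


variable {k : ℕ} {ε : ℝ}

lemma M_mul_N (hε : 1 - ε^2 ≠ 0) :
    (1 + ε • WH k) * ((1-ε^2)⁻¹ • (1 - ε • WH k)) = 1 := by
  have h1 : (1 + ε • WH k) * (1 - ε • WH k)
      = (1 - ε^2) • (1 : Matrix (Fin (2^k)) (Fin (2^k)) ℝ) := by
    rw [mul_sub, mul_one, Matrix.mul_smul, add_mul, one_mul, Matrix.smul_mul, WH_mul_WH]
    module
  rw [Matrix.mul_smul, h1, smul_smul, inv_mul_cancel₀ hε, one_smul]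

lemma MinvT (hε : 1 - ε^2 ≠ 0) :
    ((1 + ε • WH k)⁻¹)ᵀ = (1-ε^2)⁻¹ • (1 - ε • WH k) := by
  rw [Matrix.inv_eq_right_inv (M_mul_N hε), Matrix.transpose_smul, Matrix.transpose_sub,
    Matrix.transpose_one, Matrix.transpose_smul, WH_symm]

lemma pairS_eq (hε : 1 - ε^2 ≠ 0) (i j : Fin (2^k)) :
    pairS (Matrix.fromCols 1 (-WH k)) (Matrix.fromCols (WH k) 1)
      (1 + ε • WH k) i j =
    if i = j then 2*ε*(1-ε^2)⁻¹ * (1/(2^k:ℝ) - 1)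
      else 2*ε*(1-ε^2)⁻¹ * (1/(2^k:ℝ)) := by
  have hA : (1 + ε • WH k) * (-WH k) = -(WH k + ε • 1) := by
    rw [mul_neg, add_mul, one_mul, Matrix.smul_mul, WH_mul_WH]
  have hB : ((1-ε^2)⁻¹ • (1 - ε • WH k)) * WH k = (1-ε^2)⁻¹ • (WH k - ε • 1) := by
    rw [Matrix.smul_mul, sub_mul, one_mul, Matrix.smul_mul, WH_mul_WH]
  unfold pairS
  rw [Matrix.mul_fromCols, Matrix.mul_fromCols,
    Matrix.fromCols_apply_inl, Matrix.fromCols_apply_inr,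
    Matrix.fromCols_apply_inl, Matrix.fromCols_apply_inr,
    MinvT hε, hA, hB, mul_one, mul_one]
  simp only [Matrix.add_apply, Matrix.sub_apply, Matrix.neg_apply, Matrix.smul_apply,
    Matrix.one_apply, smul_eq_mul]
  have hf := WH_sq_entry i j
  by_cases hij : i = j
  · simp only [if_pos hij]
    linear_combination (2*ε*(1-ε^2)⁻¹) * hf
  · simp only [if_neg hij]
    linear_combination (2*ε*(1-ε^2)⁻¹) * hf

lemma sum_ite_const {N : ℕ} (i : Fin N) (A B : ℝ) :
    ∑ j : Fin N, (if i = j then A else B) = A + ((N:ℝ) - 1) * B := by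
  have h : ∀ j : Fin N, (if i = j then A else B) = B + (if i = j then A - B else 0) := by
    intro j; split <;> ring
  simp_rw [h]
  rw [Finset.sum_add_distrib, Finset.sum_const, Finset.sum_ite_eq]
  simp [Finset.card_univ]
  ring

lemma pairedPot_val (hk : 1 ≤ k) (hε0 : 0 < ε) (hε1 : ε < 1) :
    pairedPot (Matrix.fromCols 1 (-WH k)) (Matrix.fromCols (WH k) 1)
      (1 + ε • WH k) =
    2*ε*(1-ε^2)⁻¹ * ((2^k:ℝ) - 1) * Real.logb 2 ((2^k:ℝ) - 1) := by
  have hn2 : (2:ℝ) ≤ (2^k:ℝ) := by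
    have : (2:ℕ)^1 ≤ 2^k := Nat.pow_le_pow_right (by norm_num) hk
    exact_mod_cast this
  set n : ℝ := (2^k:ℝ) with hn
  have hn0 : 0 < n := by linarith
  have hn1 : 0 < n - 1 := by linarith
  have hεsq : 0 < 1 - ε^2 := by nlinarith
  have hc : 0 < (1-ε^2)⁻¹ := by positivity
  set B₀ : ℝ := 2*ε*(1-ε^2)⁻¹ * (1/n) with hB₀
  set A₀ : ℝ := 2*ε*(1-ε^2)⁻¹ * (1/n - 1) with hA₀
  have hB0pos : 0 < B₀ := by positivity
  have hA0eq : A₀ = -(B₀ * (n-1)) := by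
    rw [hA₀, hB₀]; field_simp; ring
  unfold pairedPot
  have hsummand : ∀ i j : Fin (2^k),
      pairS (Matrix.fromCols 1 (-WH k)) (Matrix.fromCols (WH k) 1)
        (1 + ε • WH k) i j *
        Real.logb 2 |pairS (Matrix.fromCols 1 (-WH k)) (Matrix.fromCols (WH k) 1)
          (1 + ε • WH k) i j| =
      if i = j then A₀ * Real.logb 2 |A₀| else B₀ * Real.logb 2 |B₀| := by
    intro i j
    rw [pairS_eq hεsq.ne']
    split <;> rfl
  simp_rw [hsummand, sum_ite_const, Finset.sum_const, Finset.card_univ, Fintype.card_fin,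
    nsmul_eq_mul]
  have habsA : |A₀| = B₀ * (n-1) := by
    rw [hA0eq, abs_neg, abs_of_pos (by positivity)]
  have habsB : |B₀| = B₀ := abs_of_pos hB0pos
  rw [habsA, habsB, Real.logb_mul hB0pos.ne' hn1.ne', hA0eq]
  have hnB : n * B₀ = 2*ε*(1-ε^2)⁻¹ := by
    rw [hB₀]; field_simp
  have : ((2^k:ℕ):ℝ) = n := by push_cast [hn]; ring
  rw [this]
  linear_combination ((n-1) * Real.logb 2 (n-1)) * hnB
end PPaux
end

/-- `Φ̂_{P,Q}(Id + εF) ≥ c ε n log₂ n` for `n^{-α} ≤ ε ≤ α`,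
with `P = [Id,-F]`, `Q = [F,Id]`. -/
theorem pairedPot_perturbation_lower :
    ∃ α ∈ Set.Ioo (0:ℝ) (1/2), ∃ c > (0:ℝ), ∃ n₀ : ℕ,
      ∀ k : ℕ, n₀ ≤ 2^k → ∀ ε : ℝ, ((2^k : ℝ)) ^ (-α) ≤ ε → ε ≤ α →
        c * ε * 2^k * Real.logb 2 (2^k) ≤
          pairedPot (Matrix.fromCols 1 (-WH k)) (Matrix.fromCols (WH k) 1)
            (1 + ε • WH k) := by
  refine ⟨1/4, ⟨by norm_num, by norm_num⟩, 1/2, by norm_num, 4, ?_⟩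
  intro k hk ε hεl hεh
  have hk2 : 2 ≤ k := by
    by_contra h
    push_neg at h
    have : (2:ℕ)^k ≤ 2^1 := Nat.pow_le_pow_right (by norm_num) (by omega)
    omega
  have hn4 : (4:ℝ) ≤ (2:ℝ)^k := by
    have h4 : ((4:ℕ):ℝ) ≤ ((2^k:ℕ):ℝ) := Nat.cast_le.mpr hk
    push_cast at h4
    linarith
  have hε0 : 0 < ε := lt_of_lt_of_le (Real.rpow_pos_of_pos (by positivity) _) hεl
  have hε1 : ε < 1 := by linarith
  rw [PPaux.pairedPot_val (by omega) hε0 hε1]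
  set n : ℝ := (2:ℝ)^k with hn
  have hn0 : (0:ℝ) < n := by positivity
  have hεsq : 0 < 1 - ε^2 := by nlinarith
  have hc0 : 0 < (1-ε^2)⁻¹ := by positivity
  have hc1 : 1 ≤ (1-ε^2)⁻¹ := by
    have hm := mul_inv_cancel₀ hεsq.ne'
    nlinarith [mul_nonneg hc0.le (sq_nonneg ε)]
  have hL : (2:ℝ) ≤ Real.logb 2 n := by
    have h4 : Real.logb 2 (4:ℝ) = 2 := by
      rw [show (4:ℝ) = (2:ℝ)^(2:ℕ) by norm_num, Real.logb_pow,
        Real.logb_self_eq_one (by norm_num)]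
      norm_num
    calc (2:ℝ) = Real.logb 2 4 := h4.symm
    _ ≤ Real.logb 2 n := Real.logb_le_logb_of_le (by norm_num) (by norm_num) hn4
  have hL' : Real.logb 2 n - 1 ≤ Real.logb 2 (n-1) := by
    have h2 : Real.logb 2 (n/2) = Real.logb 2 n - 1 := by
      rw [Real.logb_div hn0.ne' (by norm_num), Real.logb_self_eq_one (by norm_num)]
    rw [← h2]
    exact Real.logb_le_logb_of_le (by norm_num) (by positivity) (by linarith)
  set L := Real.logb 2 n with hLdef
  set L' := Real.logb 2 (n-1) with hL'def
  have hLpos : 0 ≤ L' := by linarith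
  have key : (1/2) * (n * L) ≤ 2 * ((n-1) * L') := by
    have h1 : (n/2) * (L/2) ≤ (n-1) * L' :=
      mul_le_mul (by linarith) (by linarith) (by linarith) (by linarith)
    nlinarith [h1]
  have h3 : 1/2 * ε * n * L ≤ 2 * ε * (n-1) * L' := by
    nlinarith [mul_le_mul_of_nonneg_left key hε0.le]
  have hq := mul_nonneg
    (mul_nonneg (mul_nonneg (by linarith : (0:ℝ) ≤ 2*ε) (by linarith : (0:ℝ) ≤ n-1)) hLpos)
    (by linarith : (0:ℝ) ≤ (1-ε^2)⁻¹ - 1)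
  nlinarith [hq, h3]
end

section
/- There exist constants C ∈ (0,1), c > 0, K > 0 and a positive integer ℓ₀ such that the following holds for every integer ℓ ≥ ℓ₀. Let x ∈ ℝ^ℓ satisfy x_i ≥ 0 for all i, 0 < ‖x‖₁ ≤ 1, and x_i ≤ 4‖x‖₁/ℓ for all i, and let y ∈ ℝ^ℓ satisfy ‖y‖₁ ≤ C‖x‖₁. Then −∑_{i=1}^ℓ (x_i + y_i) log₂|x_i + y_i| ≥ c ‖x‖₁ log₂(ℓ/‖x‖₁) − K, where the convention 0·log₂ 0 = 0 is used. -/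
open Matrix Finset

lemma aux_sqrt (t : ℝ) (h0 : 0 ≤ t) : -(t * Real.logb 2 t) ≤ 3 * Real.sqrt t := by
  rcases h0.eq_or_lt with h | h
  · simp [← h]
  · have hst : 0 < Real.sqrt t := Real.sqrt_pos.2 h
    have h1 : Real.log (Real.sqrt t)⁻¹ ≤ (Real.sqrt t)⁻¹ - 1 :=
      Real.log_le_sub_one_of_pos (by positivity)
    have h2 : Real.log (Real.sqrt t) = Real.log t / 2 := Real.log_sqrt h0
    have h3 : -Real.log t ≤ 2 / Real.sqrt t := by
      rw [Real.log_inv] at h1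
      have := inv_pos.2 hst
      rw [div_eq_mul_inv]
      nlinarith
    have h4 : -(t * Real.log t) ≤ 2 * Real.sqrt t := by
      have ht : t / Real.sqrt t = Real.sqrt t := Real.div_sqrt
      calc -(t * Real.log t) = t * (-Real.log t) := by ring
        _ ≤ t * (2 / Real.sqrt t) := by
            exact mul_le_mul_of_nonneg_left h3 h0
        _ = 2 * (t / Real.sqrt t) := by ring
        _ = 2 * Real.sqrt t := by rw [ht]
    have hlog2 : (0.6931471803 : ℝ) < Real.log 2 := Real.log_two_gt_d9
    have hlog2' : (0:ℝ) < Real.log 2 := by linarith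
    have : -(t * Real.logb 2 t) = (-(t * Real.log t)) / Real.log 2 := by
      rw [Real.logb]; ring
    rw [this, div_le_iff₀ hlog2']
    nlinarith [hst.le]


set_option maxHeartbeats 1000000 in
/-- entropy-with-noise lemma. -/
theorem entropy_with_noise :
    ∃ C ∈ Set.Ioo (0:ℝ) 1, ∃ c > (0:ℝ), ∃ K > (0:ℝ), ∃ ℓ₀ : ℕ, 0 < ℓ₀ ∧
      ∀ ℓ : ℕ, ℓ₀ ≤ ℓ → ∀ x y : Fin ℓ → ℝ,
        (∀ i, 0 ≤ x i) → 0 < ∑ i, |x i| → ∑ i, |x i| ≤ 1 →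
        (∀ i, x i ≤ 4 * (∑ i, |x i|) / ℓ) →
        (∑ i, |y i|) ≤ C * ∑ i, |x i| →
        c * (∑ i, |x i|) * Real.logb 2 (ℓ / ∑ i, |x i|) - K ≤
          -∑ i, (x i + y i) * Real.logb 2 |x i + y i| := by
  refine ⟨1/16, by norm_num, 1/4, by norm_num, 6, by norm_num, 8, by norm_num, ?_⟩
  intro ℓ hℓ x y hx hs0 hs1 hx4 hy
  set s := ∑ i, |x i| with hs
  set L := Real.logb 2 ((ℓ : ℝ) / s) with hLdef
  have hℓ8 : (8:ℝ) ≤ (ℓ:ℝ) := by exact_mod_cast hℓ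
  have hℓpos : (0:ℝ) < ℓ := by linarith
  have hxsum : ∑ i, x i = s := by
    rw [hs]; exact Finset.sum_congr rfl fun i _ => (abs_of_nonneg (hx i)).symm
  -- L ≥ 3
  have h8 : Real.logb 2 8 = 3 := by
    have : (8:ℝ) = 2 ^ (3:ℕ) := by norm_num
    rw [this, Real.logb_pow, Real.logb_self_eq_one (by norm_num)]; norm_num
  have hLlogl : Real.logb 2 (ℓ:ℝ) ≤ L := by
    apply Real.logb_le_logb_of_le (by norm_num) hℓpos
    rw [le_div_iff₀ hs0]
    nlinarith
  have hL3 : 3 ≤ L := by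
    calc (3:ℝ) = Real.logb 2 8 := h8.symm
      _ ≤ Real.logb 2 (ℓ:ℝ) := Real.logb_le_logb_of_le (by norm_num) (by norm_num) hℓ8
      _ ≤ L := hLlogl
  have hloglnn : 0 ≤ Real.logb 2 (ℓ:ℝ) := Real.logb_nonneg (by norm_num) (by linarith)
  have hl6 : Real.logb 2 6 ≤ 3 := by
    rw [← h8]; exact Real.logb_le_logb_of_le (by norm_num) (by norm_num) (by norm_num)
  have hl6nn : (0:ℝ) ≤ Real.logb 2 6 := Real.logb_nonneg (by norm_num) (by norm_num)
  set l6 := Real.logb 2 6 with hl6def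
  have hLl6 : 0 ≤ L - l6 := by linarith
  have hyi : ∀ i, |y i| ≤ s / 16 := by
    intro i
    have h1 : |y i| ≤ ∑ j, |y j| :=
      Finset.single_le_sum (fun j _ => abs_nonneg (y j)) (Finset.mem_univ i)
    have := hy
    linarith [hy]
  -- per-index bound
  have hkey : ∀ i, (if |y i| ≤ x i / 2 then x i else 0) * ((L - l6)/2)
      - (3 * L * |y i| + 3 / ℓ) ≤ -((x i + y i) * Real.logb 2 |x i + y i|) := by
    intro i
    have hxinn := hx i
    have h3ℓ : (0:ℝ) ≤ 3 / ℓ := by positivity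
    have hLynn : 0 ≤ 3 * L * |y i| := by
      have := abs_nonneg (y i); nlinarith
    by_cases hG : |y i| ≤ x i / 2
    · rw [if_pos hG]
      rcases eq_or_lt_of_le hxinn with hx0 | hx0
      · have hy0 : y i = 0 := by
          have : |y i| ≤ 0 := by rw [← hx0] at hG; linarith
          simpa using le_antisymm this (abs_nonneg _)
        rw [← hx0, hy0]
        simp
        nlinarith
      · set z := x i + y i with hzdef
        have habs := abs_le.1 (le_refl |y i|)
        have hyl := neg_abs_le (y i)
        have hyu := le_abs_self (y i)
        have hz1 : x i / 2 ≤ z := by rw [hzdef]; linarith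
        have hzpos : 0 < z := by linarith
        have hz2 : z ≤ 6 * s / ℓ := by
          have h1 : x i ≤ 4 * s / ℓ := hx4 i
          have h2 : 6 * s / (ℓ:ℝ) = (3/2) * (4 * s / ℓ) := by ring
          rw [hzdef]
          linarith
        have h6pos : (0:ℝ) < 6 * s / ℓ := by positivity
        have hlogz : Real.logb 2 z ≤ Real.logb 2 (6 * s / ℓ) :=
          Real.logb_le_logb_of_le (by norm_num) hzpos hz2
        have heq : Real.logb 2 (6 * s / ℓ) = l6 - L := by
          rw [hl6def, hLdef]
          have h1 : 6 * s / (ℓ:ℝ) = 6 * ((ℓ:ℝ)/s)⁻¹ := by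
            field_simp
          rw [h1, Real.logb_mul (by norm_num) (by positivity), Real.logb_inv]
          ring
        have hnl : L - l6 ≤ -Real.logb 2 z := by rw [heq] at hlogz; linarith
        have habsz : |z| = z := abs_of_pos hzpos
        rw [habsz]
        have hmain : x i / 2 * (L - l6) ≤ z * (-Real.logb 2 z) :=
          mul_le_mul hz1 hnl hLl6 hzpos.le
        nlinarith
    · rw [if_neg hG]
      set z := x i + y i with hzdef
      rcases le_or_gt 0 z with hz0 | hz0
      · have habsz : |z| = z := abs_of_nonneg hz0
        have hzle : z ≤ 1 := by
          have h1 : x i ≤ 4 * s / ℓ := hx4 i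
          have h2 : 4 * s / (ℓ:ℝ) ≤ 1/2 := by
            rw [div_le_iff₀ hℓpos]; nlinarith
          have := hyi i
          have := le_abs_self (y i)
          rw [hzdef]; nlinarith
        have hlz : Real.logb 2 z ≤ 0 := Real.logb_nonpos (by norm_num) hz0 hzle
        rw [habsz]
        nlinarith
      · set t := -z with htdef
        have htpos : 0 < t := by rw [htdef]; linarith
        have hty : t ≤ |y i| := by
          have := neg_abs_le (y i)
          rw [htdef, hzdef]
          have := le_abs_self (y i); nlinarith [abs_nonneg (y i)]
        have habsz : |z| = t := by rw [htdef, abs_of_neg hz0]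
        have hgoal : -(t * Real.logb 2 t) ≤ 3 * L * |y i| + 3 / ℓ := by
          rcases le_or_gt t (1/(ℓ:ℝ)^2) with hsmall | hbig
          · have h1 : -(t * Real.logb 2 t) ≤ 3 * Real.sqrt t := aux_sqrt t htpos.le
            have h2 : Real.sqrt t ≤ Real.sqrt (1/(ℓ:ℝ)^2) := Real.sqrt_le_sqrt hsmall
            have h3 : Real.sqrt (1/(ℓ:ℝ)^2) = 1/(ℓ:ℝ) := by
              have he : (1/(ℓ:ℝ)^2) = (1/(ℓ:ℝ))^2 := by ring
              rw [he, Real.sqrt_sq (by positivity)]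
            have hLy : 0 ≤ 3 * L * |y i| := by
              have := abs_nonneg (y i); nlinarith
            have : 3 / (ℓ:ℝ) = 3 * (1/(ℓ:ℝ)) := by ring
            rw [this]
            nlinarith
          · have hinv : 1/t ≤ (ℓ:ℝ)^2 := by
              rw [div_le_iff₀ htpos]
              have e : (ℓ:ℝ)^2 * (1/(ℓ:ℝ)^2) = 1 := by field_simp
              nlinarith [mul_lt_mul_of_pos_left hbig (show (0:ℝ)<(ℓ:ℝ)^2 by positivity), e]
            have h1 : Real.logb 2 (1/t) ≤ Real.logb 2 ((ℓ:ℝ)^2) :=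
              Real.logb_le_logb_of_le (by norm_num) (by positivity) hinv
            have h2 : Real.logb 2 ((ℓ:ℝ)^2) = 2 * Real.logb 2 (ℓ:ℝ) := by
              rw [Real.logb_pow]; norm_num
            have h3 : Real.logb 2 (1/t) = -Real.logb 2 t := by
              rw [one_div, Real.logb_inv]
            have h4 : -Real.logb 2 t ≤ 2 * L := by
              rw [h3] at h1; rw [h2] at h1; linarith
            have h5 : -(t * Real.logb 2 t) ≤ t * (2*L) := by
              calc -(t * Real.logb 2 t) = t * (-Real.logb 2 t) := by ring
                _ ≤ t * (2*L) := mul_le_mul_of_nonneg_left h4 htpos.le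
            have h6 : t * (2*L) ≤ 3 * L * |y i| := by nlinarith
            have h7 := le_trans h5 h6
            exact h7.trans (by linarith)
        rw [habsz]
        have : -((x i + y i) * Real.logb 2 t) = t * Real.logb 2 t := by
          rw [← hzdef]
          have : z = -t := by rw [htdef]; ring
          rw [this]; ring
        rw [this]
        linarith
  have hsum : ∑ i, ((if |y i| ≤ x i / 2 then x i else 0) * ((L - l6)/2)
      - (3 * L * |y i| + 3 / ℓ))
      ≤ ∑ i, -((x i + y i) * Real.logb 2 |x i + y i|) :=
    Finset.sum_le_sum fun i _ => hkey i
  rw [Finset.sum_neg_distrib] at hsum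
  have e1 : ∑ i, ((if |y i| ≤ x i / 2 then x i else 0) * ((L - l6)/2)
      - (3 * L * |y i| + 3 / ℓ))
      = (∑ i, if |y i| ≤ x i / 2 then x i else 0) * ((L - l6)/2)
        - (3 * L * (∑ i, |y i|) + 3) := by
    rw [Finset.sum_sub_distrib, ← Finset.sum_mul, Finset.sum_add_distrib, ← Finset.mul_sum,
      Finset.sum_const, Finset.card_univ, Fintype.card_fin, nsmul_eq_mul]
    have : (ℓ:ℝ) * (3 / ℓ) = 3 := by field_simp
    rw [this]
  rw [e1] at hsum
  have hS' : (7/8) * s ≤ ∑ i, (if |y i| ≤ x i / 2 then x i else 0) := by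
    have h1 : ∀ i ∈ Finset.univ, x i ≤ (if |y i| ≤ x i / 2 then x i else 0) + 2 * |y i| := by
      intro i _
      by_cases h : |y i| ≤ x i / 2
      · rw [if_pos h]; have := abs_nonneg (y i); linarith
      · rw [if_neg h]; push_neg at h; linarith
    have h2 := Finset.sum_le_sum h1
    rw [Finset.sum_add_distrib, ← Finset.mul_sum, hxsum] at h2
    linarith [hy]
  have hynn : 0 ≤ ∑ i, |y i| := Finset.sum_nonneg fun i _ => abs_nonneg (y i)
  have hB : 3 * L * (∑ i, |y i|) ≤ 3 * L * (s/16) := by nlinarith [hy, hL3]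
  have hA : (7/8)*s * ((L-l6)/2) ≤ (∑ i, if |y i| ≤ x i / 2 then x i else 0) * ((L-l6)/2) :=
    mul_le_mul_of_nonneg_right hS' (by linarith)
  have hfinal : 1/4 * s * L - 6 ≤ (7/8)*s * ((L-l6)/2) - (3 * L * (s/16) + 3) := by
    nlinarith [mul_nonneg (by linarith : (0:ℝ) ≤ 1 - s) hl6nn, hs0, hl6, hL3]
  linarith
end
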